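/- Let S be a diverse set of triples of N, and let G_S be the graph on vertex set N where i and j are adjacent iff i ≠ j and no triple in S contains both i and j. Then G_S is a disjoint union of complete graphs (i.e., adjacency together with equality is an equivalence relation). -/

import Mathlib

open Set

/-- A set `S` of triples (3-element subsets) of `α` is diverse: it is nonempty, all its
elements are triples, and axioms (D1) and (D2) hold. -/
def Diverse {α : Type*} [DecidableEq α] (S : Set (Finset α)) : Prop :=
  S.Nonempty ∧ (∀ t ∈ S, t.card = 3) ∧
  (∀ i j k l : α, ({i, j, k} : Finset α) ∈ S →
    ({i, j, l} : Finset α) ∈ S ∨ ({i, k, l} : Finset α) ∈ S ∨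
      ({j, k, l} : Finset α) ∈ S) ∧
  (∀ a b c x y z : α, ({a, x, y} : Finset α) ∈ S → ({b, y, z} : Finset α) ∈ S →
    ({c, x, z} : Finset α) ∈ S → ({x, y, z} : Finset α) ∈ S)

/-- The graph `G_S` on `α`: `i` and `j` are adjacent iff `i ≠ j` and no triple of `S`
contains both `i` and `j`. -/
def GS {α : Type*} (S : Set (Finset α)) : SimpleGraph α where
  Adj i j := i ≠ j ∧ ∀ t ∈ S, ¬(i ∈ t ∧ j ∈ t)
  symm := ⟨fun i j ⟨hne, h⟩ => ⟨hne.symm, fun t ht h2 => h t ht ⟨h2.2, h2.1⟩⟩⟩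
  loopless := ⟨fun i h => h.1 rfl⟩

/-- for a diverse set `S` of triples, the graph `G_S` is a disjoint union
of complete graphs, i.e. adjacency together with equality is an equivalence relation. -/
theorem stmt18 {α : Type*} [Fintype α] [DecidableEq α] (hcard : 3 ≤ Fintype.card α)
    (S : Set (Finset α)) (hS : Diverse S) :
    Equivalence (fun i j : α => i = j ∨ (GS S).Adj i j) := by
  obtain ⟨-, hcard3, hD1, -⟩ := hS
  refine ⟨fun x => Or.inl rfl, ?_, ?_⟩
  · rintro i j (rfl | h)
    · exact Or.inl rfl
    · exact Or.inr h.symm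
  · rintro i j k (rfl | hij) (rfl | hjk)
    · exact Or.inl rfl
    · exact Or.inr hjk
    · exact Or.inr hij
    · by_cases hik : i = k
      · exact Or.inl hik
      refine Or.inr ⟨hik, fun t ht ⟨hit, hkt⟩ => ?_⟩
      -- write t = {i, k, m}
      have hcard2 : ({i, k} : Finset α).card = 2 := by
        rw [Finset.card_insert_of_notMem (by simpa using hik), Finset.card_singleton]
      have hsub : ({i, k} : Finset α) ⊆ t := by
        intro x hx
        simp only [Finset.mem_insert, Finset.mem_singleton] at hx
        rcases hx with rfl | rfl <;> assumption
      have hne : (t \ {i, k}).Nonempty := by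
        rw [← Finset.card_pos, Finset.card_sdiff_of_subset hsub, hcard3 t ht, hcard2]
        norm_num
      obtain ⟨m, hm⟩ := hne
      have hmt := Finset.mem_sdiff.mp hm
      have hmi : m ≠ i := fun h => hmt.2 (by simp [h])
      have hmk : m ≠ k := fun h => hmt.2 (by simp [h])
      have hteq : t = {i, k, m} := by
        refine (Finset.eq_of_subset_of_card_le ?_ ?_).symm
        · intro x hx
          simp only [Finset.mem_insert, Finset.mem_singleton] at hx
          rcases hx with rfl | rfl | rfl
          exacts [hit, hkt, hmt.1]
        · rw [hcard3 t ht, Finset.card_insert_of_notMem (by simp [hik, hmi.symm]),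
            Finset.card_insert_of_notMem (by simp [hmk.symm]), Finset.card_singleton]
      rw [hteq] at ht
      rcases hD1 i k m j ht with h' | h' | h'
      · exact hij.2 _ h' ⟨by simp, by simp⟩
      · exact hij.2 _ h' ⟨by simp, by simp⟩
      · exact hjk.2 _ h' ⟨by simp, by simp⟩
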